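/- For the tripodal graphon of the previous construction with c=σ(A³−B³)^{−1/3}, the entropy satisfies S(g) = H(e) + (c²/2)[H(e−A+B)+H(e+A+B)−2H(e)−2B H'(e)] + O(c³) as c→0, with A,B fixed. -/

import Mathlib

open MeasureTheory Asymptotics

noncomputable def H (u : ℝ) : ℝ := -(u * Real.log u + (1 - u) * Real.log (1 - u))

lemma hasDerivAt_H {u : ℝ} (h0 : 0 < u) (h1 : u < 1) :
    HasDerivAt H (Real.log (1 - u) - Real.log u) u := by
  have h1' : (0:ℝ) < 1 - u := by linarith
  have d1 : HasDerivAt (fun v : ℝ => v * Real.log v) (Real.log u + 1) u := by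
    have := (hasDerivAt_id u).mul (Real.hasDerivAt_log h0.ne')
    exact this.congr_deriv (by simp [h0.ne'])
  have dw : HasDerivAt (fun v : ℝ => 1 - v) (-1 : ℝ) u := by
    exact (hasDerivAt_id' u).const_sub 1
  have df : HasDerivAt (fun t : ℝ => t * Real.log t) (Real.log (1 - u) + 1) (1 - u) := by
    have := (hasDerivAt_id (1 - u)).mul (Real.hasDerivAt_log h1'.ne')
    exact this.congr_deriv (by simp [h1'.ne'])
  have d2 : HasDerivAt (fun v : ℝ => (1 - v) * Real.log (1 - v))
      ((Real.log (1 - u) + 1) * (-1)) u := df.comp u dw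
  have hH : H = fun v : ℝ => -(v * Real.log v + (1 - v) * Real.log (1 - v)) := rfl
  rw [hH]
  exact (d1.add d2).neg.congr_deriv (by ring)

/-- Second-order Taylor bound for `H` at an interior point. -/
lemma taylor_H {e : ℝ} (he : 0 < e) (he1 : e < 1) :
    (fun h : ℝ => H (e + h) - H e - h * deriv H e) =O[nhds 0] fun h => h ^ 2 := by
  set φ : ℝ → ℝ := fun v => Real.log (1 - v) - Real.log v with hφ
  have hφe : deriv H e = φ e := (hasDerivAt_H he he1).deriv
  have hφd : HasDerivAt φ (-(1 - e)⁻¹ - e⁻¹) e := by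
    have dw : HasDerivAt (fun v : ℝ => 1 - v) (-1 : ℝ) e := by
      exact (hasDerivAt_id' e).const_sub 1
    have d1 : HasDerivAt (fun v : ℝ => Real.log (1 - v)) ((1 - e)⁻¹ * (-1)) e :=
      (Real.hasDerivAt_log (by linarith : (1:ℝ) - e ≠ 0)).comp e dw
    have d2 : HasDerivAt Real.log e⁻¹ e := Real.hasDerivAt_log he.ne'
    have := d1.sub d2
    exact this.congr_deriv (by ring)
  obtain ⟨C, hC⟩ := (hφd.hasFDerivAt.isBigO_sub).bound
  rw [Metric.eventually_nhds_iff] at hC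
  obtain ⟨ε, hε, hCb⟩ := hC
  set δ : ℝ := min (ε/2) (min (e/2) ((1-e)/2)) with hδdef
  have hδ : 0 < δ := by
    refine lt_min (by linarith) (lt_min (by linarith) (by linarith))
  have hδε : δ < ε := lt_of_le_of_lt (min_le_left _ _) (by linarith)
  have hδe : δ ≤ e/2 := le_trans (min_le_right _ _) (min_le_left _ _)
  have hδe1 : δ ≤ (1-e)/2 := le_trans (min_le_right _ _) (min_le_right _ _)
  rw [Asymptotics.isBigO_iff]
  refine ⟨|C|, ?_⟩
  rw [Metric.eventually_nhds_iff]
  refine ⟨δ, hδ, fun h hh => ?_⟩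
  rw [Real.dist_eq, sub_zero] at hh
  set G : ℝ → ℝ := fun t => H (e + t) - t * φ e with hG
  have hmem : ∀ t ∈ Set.uIcc (0:ℝ) h, |t| ≤ |h| := by
    intro t ht
    rcases Set.mem_uIcc.1 ht with ⟨h1, h2⟩ | ⟨h1, h2⟩ <;>
      · rw [abs_le]
        constructor <;> nlinarith [le_abs_self h, neg_abs_le h, abs_nonneg h]
  have hder : ∀ t ∈ Set.uIcc (0:ℝ) h,
      HasDerivWithinAt G (φ (e + t) - φ e) (Set.uIcc (0:ℝ) h) t := by
    intro t ht
    have htabs := hmem t ht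
    have h0t : 0 < e + t := by
      have := abs_le.1 htabs
      have := abs_le.1 hh.le
      nlinarith [hδe]
    have h1t : e + t < 1 := by
      have := abs_le.1 htabs
      have := abs_le.1 hh.le
      nlinarith [hδe1]
    have hsh : HasDerivAt (fun t : ℝ => e + t) 1 t := by
      exact (hasDerivAt_id' t).const_add e
    have h1 : HasDerivAt (fun t : ℝ => H (e + t)) (φ (e + t)) t := by
      have := (hasDerivAt_H h0t h1t).comp t hsh
      exact this.congr_deriv (mul_one _)
    have h2 : HasDerivAt (fun t : ℝ => t * φ e) (φ e) t := by
      simpa using (hasDerivAt_id t).mul_const (φ e)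
    exact (h1.sub h2).hasDerivWithinAt
  have hbound : ∀ t ∈ Set.uIcc (0:ℝ) h, ‖φ (e + t) - φ e‖ ≤ |C| * |h| := by
    intro t ht
    have htabs := hmem t ht
    have hdist : dist (e + t) e < ε := by
      rw [Real.dist_eq]
      have : |e + t - e| = |t| := by ring_nf
      rw [this]
      exact lt_of_le_of_lt htabs (lt_trans hh hδε)
    have := hCb hdist
    have h2 : ‖e + t - e‖ = |t| := by rw [Real.norm_eq_abs]; ring_nf
    rw [h2] at this
    calc ‖φ (e + t) - φ e‖ ≤ C * |t| := this
      _ ≤ |C| * |h| := by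
          have := abs_nonneg t
          nlinarith [le_abs_self C, abs_nonneg h, abs_nonneg C]
  have key := Convex.norm_image_sub_le_of_norm_hasDerivWithin_le hder hbound
    (convex_uIcc (0:ℝ) h) (Set.left_mem_uIcc) (Set.right_mem_uIcc)
  have hG0 : G 0 = H e := by simp [hG]
  have hGh : G h - G 0 = H (e + h) - H e - h * deriv H e := by
    rw [hG0, hφe]; simp [hG]; ring
  rw [hGh] at key
  calc ‖H (e + h) - H e - h * deriv H e‖ ≤ |C| * |h| * ‖h - 0‖ := key
    _ = |C| * ‖h ^ 2‖ := by
        rw [sub_zero, Real.norm_eq_abs, Real.norm_eq_abs, abs_pow]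
        ring

lemma int_step (a b p q r : ℝ) (ha : 0 ≤ a) (hab : a ≤ b) (hb1 : b ≤ 1) :
    (∫ y in Set.Icc (0:ℝ) 1, (if y ≤ a then p else if y ≤ b then q else r)) =
      a * p + (b - a) * q + (1 - b) * r := by
  have hb0 : (0:ℝ) ≤ b := le_trans ha hab
  have ha1 : a ≤ 1 := le_trans hab hb1
  have hu1 : Set.Ioc a b ∪ Set.Ioc b 1 = Set.Ioc a 1 := Set.Ioc_union_Ioc_eq_Ioc hab hb1
  have hu2 : Set.Icc (0:ℝ) a ∪ Set.Ioc a 1 = Set.Icc 0 1 := Set.Icc_union_Ioc_eq_Icc ha ha1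
  set f : ℝ → ℝ := fun y => if y ≤ a then p else if y ≤ b then q else r with hf
  have hIccfin : volume (Set.Icc (0:ℝ) a) < ⊤ := by
    rw [Real.volume_Icc]; exact ENNReal.ofReal_lt_top
  have hIocfin : ∀ u v : ℝ, volume (Set.Ioc u v) < ⊤ := by
    intro u v; rw [Real.volume_Ioc]; exact ENNReal.ofReal_lt_top
  have e1 : Set.EqOn (fun _ : ℝ => p) f (Set.Icc 0 a) := by
    intro y hy; simp only [hf]; rw [if_pos hy.2]
  have e2 : Set.EqOn (fun _ : ℝ => q) f (Set.Ioc a b) := by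
    intro y hy; simp only [hf]; rw [if_neg (not_le.2 hy.1), if_pos hy.2]
  have e3 : Set.EqOn (fun _ : ℝ => r) f (Set.Ioc b 1) := by
    intro y hy; simp only [hf]
    rw [if_neg (not_le.2 (lt_of_le_of_lt hab hy.1)), if_neg (not_le.2 hy.1)]
  have i1 : IntegrableOn f (Set.Icc 0 a) :=
    (integrableOn_const hIccfin.ne).congr_fun e1 measurableSet_Icc
  have i2 : IntegrableOn f (Set.Ioc a b) :=
    (integrableOn_const (hIocfin a b).ne).congr_fun e2 measurableSet_Ioc
  have i3 : IntegrableOn f (Set.Ioc b 1) :=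
    (integrableOn_const (hIocfin b 1).ne).congr_fun e3 measurableSet_Ioc
  have d1 : Disjoint (Set.Icc (0:ℝ) a) (Set.Ioc a 1) := by
    rw [Set.disjoint_left]; intro x hx hx'; exact absurd hx.2 (not_le.2 hx'.1)
  have d2 : Disjoint (Set.Ioc a b) (Set.Ioc b 1) := by
    rw [Set.disjoint_left]; intro x hx hx'; exact absurd hx.2 (not_le.2 hx'.1)
  have v1 : (∫ y in Set.Icc (0:ℝ) a, f y) = a * p := by
    rw [setIntegral_congr_fun measurableSet_Icc e1.symm, setIntegral_const,
      measureReal_def, Real.volume_Icc, smul_eq_mul, ENNReal.toReal_ofReal (by linarith)]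
    ring
  have v2 : (∫ y in Set.Ioc a b, f y) = (b - a) * q := by
    rw [setIntegral_congr_fun measurableSet_Ioc e2.symm, setIntegral_const,
      measureReal_def, Real.volume_Ioc, smul_eq_mul, ENNReal.toReal_ofReal (by linarith)]
  have v3 : (∫ y in Set.Ioc b (1:ℝ), f y) = (1 - b) * r := by
    rw [setIntegral_congr_fun measurableSet_Ioc e3.symm, setIntegral_const,
      measureReal_def, Real.volume_Ioc, smul_eq_mul, ENNReal.toReal_ofReal (by linarith)]
  calc (∫ y in Set.Icc (0:ℝ) 1, f y)
      = ∫ y in Set.Icc (0:ℝ) a ∪ Set.Ioc a 1, f y := by rw [hu2]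
    _ = (∫ y in Set.Icc (0:ℝ) a, f y) + ∫ y in Set.Ioc a 1, f y := by
        rw [setIntegral_union d1 measurableSet_Ioc i1 (by rw [← hu1]; exact i2.union i3)]
    _ = (∫ y in Set.Icc (0:ℝ) a, f y) + ((∫ y in Set.Ioc a b, f y) + ∫ y in Set.Ioc b 1, f y) := by
        rw [← hu1, setIntegral_union d2 measurableSet_Ioc i2 i3]
    _ = a * p + (b - a) * q + (1 - b) * r := by rw [v1, v2, v3]; ring

lemma inner_le (c x a1 a2 a3 a4 : ℝ) (hc0 : 0 < c) (hc1 : c < 1) (hx0 : 0 ≤ x) (hxc : x ≤ c) :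
    (∫ y in Set.Icc (0:ℝ) 1, H (if x ≤ c ∧ y ≤ c then
        (if (x ≤ c/2 ∧ y ≤ c/2) ∨ (c/2 < x ∧ c/2 < y) then a1 else a2)
      else if x ≤ c ∨ y ≤ c then a3 else a4)) =
      c/2 * H a1 + c/2 * H a2 + (1 - c) * H a3 := by
  by_cases hx : x ≤ c/2
  · have heq : (∫ y in Set.Icc (0:ℝ) 1, H (if x ≤ c ∧ y ≤ c then
        (if (x ≤ c/2 ∧ y ≤ c/2) ∨ (c/2 < x ∧ c/2 < y) then a1 else a2)
      else if x ≤ c ∨ y ≤ c then a3 else a4)) =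
        ∫ y in Set.Icc (0:ℝ) 1, (if y ≤ c/2 then H a1 else if y ≤ c then H a2 else H a3) := by
      refine setIntegral_congr_fun measurableSet_Icc fun y _ => ?_
      rcases le_or_gt y (c/2) with h | h
      · rw [if_pos ⟨hxc, by linarith⟩, if_pos (Or.inl ⟨hx, h⟩), if_pos h]
      · rw [if_neg (not_le.2 h)]
        rcases le_or_gt y c with h' | h'
        · rw [if_pos ⟨hxc, h'⟩, if_pos h',
            if_neg (by rintro (⟨_, hy2⟩ | ⟨hx2, _⟩) <;> linarith)]
        · rw [if_neg (not_le.2 h'), if_neg (by rintro ⟨_, hy⟩; linarith),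
            if_pos (Or.inl hxc)]
    rw [heq, int_step (c/2) c (H a1) (H a2) (H a3) (by linarith) (by linarith) (by linarith)]
    ring
  · have heq : (∫ y in Set.Icc (0:ℝ) 1, H (if x ≤ c ∧ y ≤ c then
        (if (x ≤ c/2 ∧ y ≤ c/2) ∨ (c/2 < x ∧ c/2 < y) then a1 else a2)
      else if x ≤ c ∨ y ≤ c then a3 else a4)) =
        ∫ y in Set.Icc (0:ℝ) 1, (if y ≤ c/2 then H a2 else if y ≤ c then H a1 else H a3) := by
      refine setIntegral_congr_fun measurableSet_Icc fun y _ => ?_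
      push_neg at hx
      rcases le_or_gt y (c/2) with h | h
      · rw [if_pos ⟨hxc, by linarith⟩,
          if_neg (by rintro (⟨hx2, _⟩ | ⟨_, hy2⟩) <;> linarith), if_pos h]
      · rw [if_neg (not_le.2 h)]
        rcases le_or_gt y c with h' | h'
        · rw [if_pos ⟨hxc, h'⟩, if_pos (Or.inr ⟨hx, h⟩), if_pos h']
        · rw [if_neg (not_le.2 h'), if_neg (by rintro ⟨_, hy⟩; linarith),
            if_pos (Or.inl hxc)]
    rw [heq, int_step (c/2) c (H a2) (H a1) (H a3) (by linarith) (by linarith) (by linarith)]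
    ring

lemma inner_gt (c x a1 a2 a3 a4 : ℝ) (hc0 : 0 < c) (hc1 : c < 1) (hx : ¬ x ≤ c) :
    (∫ y in Set.Icc (0:ℝ) 1, H (if x ≤ c ∧ y ≤ c then
        (if (x ≤ c/2 ∧ y ≤ c/2) ∨ (c/2 < x ∧ c/2 < y) then a1 else a2)
      else if x ≤ c ∨ y ≤ c then a3 else a4)) =
      c * H a3 + (1 - c) * H a4 := by
  have heq : (∫ y in Set.Icc (0:ℝ) 1, H (if x ≤ c ∧ y ≤ c then
        (if (x ≤ c/2 ∧ y ≤ c/2) ∨ (c/2 < x ∧ c/2 < y) then a1 else a2)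
      else if x ≤ c ∨ y ≤ c then a3 else a4)) =
      ∫ y in Set.Icc (0:ℝ) 1, (if y ≤ c then H a3 else if y ≤ c then H a3 else H a4) := by
    refine setIntegral_congr_fun measurableSet_Icc fun y _ => ?_
    rcases le_or_gt y c with h | h
    · rw [if_neg (by rintro ⟨hx', _⟩; exact hx hx'), if_pos (Or.inr h), if_pos h]
    · rw [if_neg (by rintro ⟨hx', _⟩; exact hx hx'),
        if_neg (by rintro (hx' | hy); exact hx hx'; linarith),
        if_neg (not_le.2 h), if_neg (not_le.2 h)]
  rw [heq, int_step c c (H a3) (H a3) (H a4) (by linarith) le_rfl (by linarith)]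
  ring

lemma outer_int (c a1 a2 a3 a4 : ℝ) (hc0 : 0 < c) (hc1 : c < 1) :
    (∫ x in Set.Icc (0:ℝ) 1, ∫ y in Set.Icc (0:ℝ) 1, H (if x ≤ c ∧ y ≤ c then
        (if (x ≤ c/2 ∧ y ≤ c/2) ∨ (c/2 < x ∧ c/2 < y) then a1 else a2)
      else if x ≤ c ∨ y ≤ c then a3 else a4)) =
      c^2/2 * H a1 + c^2/2 * H a2 + 2*c*(1-c) * H a3 + (1-c)^2 * H a4 := by
  have heq : (∫ x in Set.Icc (0:ℝ) 1, ∫ y in Set.Icc (0:ℝ) 1, H (if x ≤ c ∧ y ≤ c then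
        (if (x ≤ c/2 ∧ y ≤ c/2) ∨ (c/2 < x ∧ c/2 < y) then a1 else a2)
      else if x ≤ c ∨ y ≤ c then a3 else a4)) =
      ∫ x in Set.Icc (0:ℝ) 1, (if x ≤ c then (c/2 * H a1 + c/2 * H a2 + (1 - c) * H a3)
        else if x ≤ c then 0 else (c * H a3 + (1 - c) * H a4)) := by
    refine setIntegral_congr_fun measurableSet_Icc fun x hx => ?_
    by_cases hxc : x ≤ c
    · rw [if_pos hxc, inner_le c x a1 a2 a3 a4 hc0 hc1 hx.1 hxc]
    · rw [if_neg hxc, if_neg hxc, inner_gt c x a1 a2 a3 a4 hc0 hc1 hxc]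
  rw [heq, int_step c c _ 0 _ (by linarith) le_rfl (by linarith)]
  ring

theorem stmt18 (e A B : ℝ) (he : 0 < e) (he1 : e < 1)
    (hB : 0 < B) (hAB : B < A) (hlow : 0 < e - A + B) (hhigh : e + A + B < 1)
    (g : ℝ → ℝ → ℝ → ℝ)
    (hg : ∀ c x y : ℝ, g c x y =
      if x ≤ c ∧ y ≤ c then
        (if (x ≤ c/2 ∧ y ≤ c/2) ∨ (c/2 < x ∧ c/2 < y) then e - A + (1 - c) * B
         else e + A + (1 - c) * B)
      else if x ≤ c ∨ y ≤ c then e - c * B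
      else e + c ^ 2 * B / (1 - c)) :
    (fun c : ℝ =>
        (∫ x in Set.Icc (0:ℝ) 1, ∫ y in Set.Icc (0:ℝ) 1, H (g c x y))
          - (H e + c ^ 2 / 2 *
              (H (e - A + B) + H (e + A + B) - 2 * H e - 2 * B * deriv H e)))
      =O[nhdsWithin 0 (Set.Ioi 0)] fun c : ℝ => c ^ 3 := by
  set l : Filter ℝ := nhdsWithin 0 (Set.Ioi 0) with hl
  have hp1a : (0:ℝ) < e - A + B := hlow
  have hp1b : e - A + B < 1 := by nlinarith
  have hp2a : (0:ℝ) < e + A + B := by nlinarith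
  have hp2b : e + A + B < 1 := hhigh
  -- the five big-O pieces
  -- s1, s2 : first order terms
  have hO1 : ∀ p : ℝ, 0 < p → p < 1 →
      (fun c : ℝ => H (p - B*c) - H p) =O[nhds 0] fun c => c := by
    intro p hp0 hp1
    have hsh : HasDerivAt (fun c : ℝ => p - B*c) (-B) 0 := by
      simpa using ((hasDerivAt_id (0:ℝ)).const_mul B).const_sub p
    have hd : HasDerivAt (fun c : ℝ => H (p - B*c))
        ((Real.log (1 - p) - Real.log p) * (-B)) 0 := by
      have h0 : p - B*0 = p := by ring
      have := (hasDerivAt_H (u := p - B*0) (by rw [h0]; exact hp0) (by rw [h0]; exact hp1)).comp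
        0 hsh
      rw [h0] at this
      exact this
    have := hd.hasFDerivAt.isBigO_sub
    simpa using this
  have hD := taylor_H he he1
  -- composition along c ↦ -(B*c)
  have htend1 : Filter.Tendsto (fun c : ℝ => -(B*c)) l (nhds 0) := by
    have : Filter.Tendsto (fun c : ℝ => -(B*c)) (nhds 0) (nhds 0) := by
      have hcont : Continuous fun c : ℝ => -(B*c) := by fun_prop
      have := hcont.tendsto 0
      simpa using this
    exact this.mono_left nhdsWithin_le_nhds
  have hD3 : (fun c : ℝ => H (e + -(B*c)) - H e - (-(B*c)) * deriv H e) =O[l]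
      fun c => c^2 := by
    have hcomp := hD.comp_tendsto htend1
    have hb : (fun c : ℝ => (-(B*c))^2) =O[l] fun c => c^2 := by
      rw [Asymptotics.isBigO_iff]
      refine ⟨B^2, Filter.Eventually.of_forall fun c => ?_⟩
      rw [Real.norm_eq_abs, Real.norm_eq_abs]
      rw [show (-(B*c))^2 = B^2 * c^2 by ring, abs_mul, abs_of_nonneg (sq_nonneg B)]
    exact hcomp.trans hb
  -- composition along u c = c^2*B/(1-c)
  have htend2 : Filter.Tendsto (fun c : ℝ => c^2*B/(1-c)) l (nhds 0) := by
    have hcont : ContinuousAt (fun c : ℝ => c^2*B/(1-c)) 0 := by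
      apply ContinuousAt.div
      · fun_prop
      · fun_prop
      · norm_num
    have := hcont.tendsto
    simp only [ne_eq, OfNat.ofNat_ne_zero, not_false_eq_true, zero_pow, zero_mul,
      sub_zero, zero_div] at this
    exact this.mono_left nhdsWithin_le_nhds
  have hD4 : (fun c : ℝ => H (e + c^2*B/(1-c)) - H e - (c^2*B/(1-c)) * deriv H e) =O[l]
      fun c => c^3 := by
    have hcomp := hD.comp_tendsto htend2
    have hb : (fun c : ℝ => (c^2*B/(1-c))^2) =O[l] fun c => c^3 := by
      rw [Asymptotics.isBigO_iff]
      refine ⟨4*B^2, ?_⟩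
      filter_upwards [Ioo_mem_nhdsGT_of_mem
        (show (0:ℝ) ∈ Set.Ico (0:ℝ) (1/2) by constructor <;> norm_num)]
        with c hc
      obtain ⟨hc0, hc12⟩ : (0:ℝ) < c ∧ c < 1/2 := hc
      have h1c : (1:ℝ)/2 ≤ 1 - c := by linarith
      have h1c0 : (0:ℝ) < 1 - c := by linarith
      rw [Real.norm_eq_abs, Real.norm_eq_abs,
        abs_of_nonneg (by positivity : (0:ℝ) ≤ (c^2*B/(1-c))^2),
        abs_of_nonneg (by positivity : (0:ℝ) ≤ c^3)]
      rw [div_pow, div_le_iff₀ (by positivity : (0:ℝ) < (1-c)^2)]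
      have h4 : (1:ℝ)/4 ≤ (1-c)^2 := by nlinarith
      have h5 : c^4 ≤ c^3 := by nlinarith [pow_pos hc0 3]
      nlinarith [sq_nonneg B, pow_pos hc0 3, mul_nonneg (sq_nonneg B) (pow_pos hc0 3).le]
    exact hcomp.trans hb
  -- bounded factors
  have hbd1 : (fun c : ℝ => 2*(1-c)) =O[l] (fun _ => (1:ℝ)) := by
    have : Filter.Tendsto (fun c : ℝ => 2*(1-c)) (nhds 0) (nhds (2*(1-0))) := by
      have hcont : Continuous fun c : ℝ => 2*(1-c) := by fun_prop
      exact hcont.tendsto 0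
    exact (this.mono_left nhdsWithin_le_nhds).isBigO_one ℝ
  have hbd2 : (fun c : ℝ => (1-c)^2) =O[l] (fun _ => (1:ℝ)) := by
    have : Filter.Tendsto (fun c : ℝ => (1-c)^2) (nhds 0) (nhds ((1-0)^2)) := by
      have hcont : Continuous fun c : ℝ => (1-c)^2 := by fun_prop
      exact hcont.tendsto 0
    exact (this.mono_left nhdsWithin_le_nhds).isBigO_one ℝ
  -- assemble the five terms
  have hs1 : (fun c : ℝ => 1/2 * (c^2 * (H ((e-A+B) - B*c) - H (e-A+B)))) =O[l]
      fun c => c^3 := by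
    have := ((isBigO_refl (fun c : ℝ => c^2) (nhds 0)).mul (hO1 _ hp1a hp1b)).const_mul_left
      (1/2 : ℝ)
    refine (this.mono nhdsWithin_le_nhds).trans ?_
    rw [Asymptotics.isBigO_iff]
    exact ⟨1, Filter.Eventually.of_forall fun c => by
      rw [show c^2 * c = c^3 by ring]; simp⟩
  have hs2 : (fun c : ℝ => 1/2 * (c^2 * (H ((e+A+B) - B*c) - H (e+A+B)))) =O[l]
      fun c => c^3 := by
    have := ((isBigO_refl (fun c : ℝ => c^2) (nhds 0)).mul (hO1 _ hp2a hp2b)).const_mul_left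
      (1/2 : ℝ)
    refine (this.mono nhdsWithin_le_nhds).trans ?_
    rw [Asymptotics.isBigO_iff]
    exact ⟨1, Filter.Eventually.of_forall fun c => by
      rw [show c^2 * c = c^3 by ring]; simp⟩
  have hs3 : (fun c : ℝ => (2*(1-c)) *
      (c * (H (e + -(B*c)) - H e - (-(B*c)) * deriv H e))) =O[l] fun c => c^3 := by
    have := hbd1.mul ((isBigO_refl (fun c : ℝ => c) l).mul hD3)
    refine this.trans ?_
    rw [Asymptotics.isBigO_iff]
    exact ⟨1, Filter.Eventually.of_forall fun c => by
      rw [show (1:ℝ) * (c * c^2) = c^3 by ring]; simp⟩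
  have hs4 : (fun c : ℝ => (1-c)^2 *
      (H (e + c^2*B/(1-c)) - H e - (c^2*B/(1-c)) * deriv H e)) =O[l] fun c => c^3 := by
    have := hbd2.mul hD4
    refine this.trans ?_
    rw [Asymptotics.isBigO_iff]
    exact ⟨1, Filter.Eventually.of_forall fun c => by rw [one_mul]; simp⟩
  have hs5 : (fun c : ℝ => c^3 * (B * deriv H e)) =O[l] fun c => c^3 := by
    rw [Asymptotics.isBigO_iff]
    refine ⟨|B * deriv H e|, Filter.Eventually.of_forall fun c => ?_⟩
    rw [Real.norm_eq_abs, Real.norm_eq_abs, abs_mul]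
    nlinarith [abs_nonneg (c^3), abs_nonneg (B * deriv H e)]
  have hsum := (((hs1.add hs2).add hs3).add hs4).add hs5
  -- the algebraic identity on (0,1)
  have hev : ∀ c ∈ Set.Ioo (0:ℝ) 1,
      (1/2 * (c^2 * (H ((e-A+B) - B*c) - H (e-A+B)))
        + 1/2 * (c^2 * (H ((e+A+B) - B*c) - H (e+A+B)))
        + (2*(1-c)) * (c * (H (e + -(B*c)) - H e - (-(B*c)) * deriv H e))
        + (1-c)^2 * (H (e + c^2*B/(1-c)) - H e - (c^2*B/(1-c)) * deriv H e)
        + c^3 * (B * deriv H e)) =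
      (∫ x in Set.Icc (0:ℝ) 1, ∫ y in Set.Icc (0:ℝ) 1, H (g c x y))
          - (H e + c ^ 2 / 2 *
              (H (e - A + B) + H (e + A + B) - 2 * H e - 2 * B * deriv H e)) := by
    intro c hc
    obtain ⟨hc0, hc1⟩ := hc
    have h1c : (1:ℝ) - c ≠ 0 := by intro h; linarith [sub_eq_zero.1 h]
    have hkey : (∫ x in Set.Icc (0:ℝ) 1, ∫ y in Set.Icc (0:ℝ) 1, H (g c x y)) =
        c^2/2 * H (e - A + (1 - c) * B) + c^2/2 * H (e + A + (1 - c) * B)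
          + 2*c*(1-c) * H (e - c * B) + (1-c)^2 * H (e + c ^ 2 * B / (1 - c)) := by
      simp only [hg]
      exact outer_int c _ _ _ _ hc0 hc1
    rw [hkey,
      show e - A + (1 - c) * B = (e-A+B) - B*c from by ring,
      show e + A + (1 - c) * B = (e+A+B) - B*c from by ring,
      show e - c * B = e + -(B*c) from by ring]
    set X1 := H (e - A + B - B*c)
    set Y1 := H (e - A + B)
    set X2 := H (e + A + B - B*c)
    set Y2 := H (e + A + B)
    set X3 := H (e + -(B*c))
    set X4 := H (e + c^2*B/(1-c))
    set He := H e
    set dH := deriv H e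
    field_simp
    ring
  have hfeq : (fun c : ℝ =>
      1/2 * (c^2 * (H ((e-A+B) - B*c) - H (e-A+B)))
        + 1/2 * (c^2 * (H ((e+A+B) - B*c) - H (e+A+B)))
        + (2*(1-c)) * (c * (H (e + -(B*c)) - H e - (-(B*c)) * deriv H e))
        + (1-c)^2 * (H (e + c^2*B/(1-c)) - H e - (c^2*B/(1-c)) * deriv H e)
        + c^3 * (B * deriv H e)) =ᶠ[l] (fun c : ℝ =>
      (∫ x in Set.Icc (0:ℝ) 1, ∫ y in Set.Icc (0:ℝ) 1, H (g c x y))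
          - (H e + c ^ 2 / 2 *
              (H (e - A + B) + H (e + A + B) - 2 * H e - 2 * B * deriv H e))) := by
    filter_upwards [Ioo_mem_nhdsGT_of_mem
      (show (0:ℝ) ∈ Set.Ico (0:ℝ) 1 by constructor <;> norm_num)]
      with c hc using hev c hc
  exact hsum.congr' hfeq Filter.EventuallyEq.rfl
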